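/- If q2 < p13/(p13+p23) and x is a real number with 0 ≤ x < q1·(1−q2)·p13, then for every p ∈ [0,1], y2(p, x) ≤ y2(0, x) = q2·p23·(1 − x/((1−q2)·p13)); that is, the maximum over p ∈ [0,1] of y2(p, x) is attained at p = 0. -/

import Mathlib

/-- If `q2 < p13/(p13+p23)` and `0 ≤ x < q1·(1−q2)·p13`, then for every
`p ∈ [0,1]`, `y2(p, x) ≤ y2(0, x)`, and `y2(0, x) = q2·p23·(1 − x/((1−q2)·p13))`;
i.e. the maximum over `p ∈ [0,1]` of `y2(p, x)` is attained at `p = 0`. -/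
theorem stmt_5 (q1 q2 p12 p13 p23 : ℝ)
    (hq1 : 0 < q1) (hq1' : q1 < 1) (hq2 : 0 < q2) (hq2' : q2 < 1)
    (hp12 : 0 < p12) (hp12' : p12 ≤ 1) (hp13 : 0 < p13) (hp13' : p13 < 1)
    (hp23 : 0 < p23) (hp23' : p23 ≤ 1) (hp : p13 < p23)
    (y2 : ℝ → ℝ → ℝ)
    (hy2 : ∀ p x, y2 p x =
      q2 * p23 - ((1 - q2) * p12 * (1 - p13) * p + q2 * p23) * x /
        ((1 - q2) * (p13 + (1 - p13) * p12 * p)))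
    (hq : q2 < p13 / (p13 + p23))
    (x : ℝ) (hx0 : 0 ≤ x) (hx1 : x < q1 * (1 - q2) * p13) :
    (∀ p ∈ Set.Icc (0:ℝ) 1, y2 p x ≤ y2 0 x) ∧
    y2 0 x = q2 * p23 * (1 - x / ((1 - q2) * p13)) := by
  have hc : (0:ℝ) < 1 - q2 := by linarith
  have hkey : q2 * (p13 + p23) < p13 :=
    (lt_div_iff₀ (by linarith : (0:ℝ) < p13 + p23)).mp hq
  have hk : 0 < (1 - q2) * p13 - q2 * p23 := by nlinarith
  constructor
  · rintro p ⟨hp0, hp1⟩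
    rw [hy2, hy2]
    have hD : (0:ℝ) ≤ (1 - p13) * p12 * p :=
      mul_nonneg (mul_nonneg (by linarith) hp12.le) hp0
    have hden0 : (0:ℝ) < (1 - q2) * (p13 + (1 - p13) * p12 * 0) := by
      simp only [mul_zero, add_zero]; positivity
    have hdenp : (0:ℝ) < (1 - q2) * (p13 + (1 - p13) * p12 * p) := by nlinarith
    have key2 : 0 ≤ x * (1 - q2) * ((1 - p13) * p12) * p * ((1 - q2) * p13 - q2 * p23) :=
      mul_nonneg (mul_nonneg (mul_nonneg (mul_nonneg hx0 hc.le)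
        (mul_nonneg (by linarith) hp12.le)) hp0) hk.le
    have h : ((1 - q2) * p12 * (1 - p13) * 0 + q2 * p23) * x /
        ((1 - q2) * (p13 + (1 - p13) * p12 * 0)) ≤
        ((1 - q2) * p12 * (1 - p13) * p + q2 * p23) * x /
        ((1 - q2) * (p13 + (1 - p13) * p12 * p)) := by
      rw [div_le_div_iff₀ hden0 hdenp]
      nlinarith [key2]
    linarith
  · rw [hy2]
    have h1 : (1 - q2) * p13 ≠ 0 := by positivity
    have h2 : p13 ≠ 0 := hp13.ne'
    field_simp
    simp only [mul_zero, add_zero, zero_add]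
    rw [mul_sub, mul_div_cancel₀ _ h2]
    ring
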